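/- Assume Fix(T, P_U) ≠ ∅. Then for any starting point z⁰ ∈ ℝⁿ, the sequence defined by z^{k+1} = P_U(T(z^k)) converges to a point z̄ ∈ Fix(T, P_U). -/

import Mathlib

open RealInnerProductSpace


/-- An operator is firmly nonexpansive if
`‖T x - T y‖² ≤ ‖x - y‖² - ‖(T x - T y) - (x - y)‖²` for all `x, y`. -/
def FirmlyNonexpansive {n : ℕ} (T : EuclideanSpace ℝ (Fin n) → EuclideanSpace ℝ (Fin n)) : Prop :=
  ∀ x y, ‖T x - T y‖ ^ 2 ≤ ‖x - y‖ ^ 2 - ‖(T x - T y) - (x - y)‖ ^ 2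

/-- `P` is the orthogonal projection onto `C`: for each `x`, `P x ∈ C` and `P x`
minimizes the distance from `x` to points of `C`. -/
def IsProjOn {n : ℕ} (C : Set (EuclideanSpace ℝ (Fin n)))
    (P : EuclideanSpace ℝ (Fin n) → EuclideanSpace ℝ (Fin n)) : Prop :=
  ∀ x, P x ∈ C ∧ ∀ y ∈ C, ‖x - P x‖ ≤ ‖x - y‖

lemma proj_fixed {n : ℕ} {U : Set (EuclideanSpace ℝ (Fin n))} {PU}
    (hPU : IsProjOn U PU) {u} (hu : u ∈ U) : PU u = u := by
  have h := (hPU u).2 u hu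
  simp only [sub_self, norm_zero] at h
  have h0 : ‖u - PU u‖ = 0 := le_antisymm h (norm_nonneg _)
  exact (sub_eq_zero.mp (norm_eq_zero.mp h0)).symm

lemma proj_orth {n : ℕ} {U : Set (EuclideanSpace ℝ (Fin n))}
    (hUaff : ∀ x ∈ U, ∀ y ∈ U, ∀ t : ℝ, t • x + (1 - t) • y ∈ U)
    {PU} (hPU : IsProjOn U PU) (x : EuclideanSpace ℝ (Fin n)) {y} (hy : y ∈ U) :
    ⟪x - PU x, y - PU x⟫ = 0 := by
  set c : ℝ := ⟪x - PU x, y - PU x⟫ with hc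
  set d : ℝ := ‖y - PU x‖^2 with hdd
  have key : ∀ t : ℝ, 0 ≤ -2*t*c + t^2 * d := by
    intro t
    have hw : t • y + (1 - t) • PU x ∈ U := hUaff y hy (PU x) (hPU x).1 t
    have h := (hPU x).2 _ hw
    have hxw : x - (t • y + (1 - t) • PU x) = (x - PU x) - t • (y - PU x) := by
      module
    have h2 : ‖x - PU x‖^2 ≤ ‖(x - PU x) - t • (y - PU x)‖^2 := by
      rw [← hxw]
      nlinarith [norm_nonneg (x - PU x), norm_nonneg (x - (t • y + (1 - t) • PU x))]
    have expand : ‖(x - PU x) - t • (y - PU x)‖^2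
        = ‖x - PU x‖^2 - 2*(t*c) + t^2*d := by
      rw [norm_sub_sq_real (x - PU x), real_inner_smul_right, norm_smul,
        mul_pow, Real.norm_eq_abs, sq_abs]
    rw [expand] at h2
    linarith
  by_cases hd : d = 0
  · have h0 : y - PU x = 0 := by
      rw [hdd, pow_eq_zero_iff two_ne_zero, norm_eq_zero] at hd; exact hd
    rw [hc, h0, inner_zero_right]
  · have hd' : 0 < d := lt_of_le_of_ne (by positivity) (Ne.symm hd)
    set t := c / d with ht
    have htd : t * d = c := div_mul_cancel₀ _ (ne_of_gt hd')
    have h := key t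
    rw [← htd] at h
    have ht2 : t^2 ≤ 0 := by nlinarith [hd']
    have ht0 : t = 0 := by
      have := le_antisymm ht2 (sq_nonneg t)
      exact pow_eq_zero_iff two_ne_zero |>.mp this
    rw [← htd, ht0, zero_mul]

lemma proj_inner_eq {n : ℕ} {U : Set (EuclideanSpace ℝ (Fin n))}
    (hUaff : ∀ x ∈ U, ∀ y ∈ U, ∀ t : ℝ, t • x + (1 - t) • y ∈ U)
    {PU} (hPU : IsProjOn U PU) (a b : EuclideanSpace ℝ (Fin n)) :
    ‖PU a - PU b‖^2 = ⟪PU a - PU b, a - b⟫ := by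
  have h1 : ⟪a - PU a, PU b - PU a⟫ = 0 := proj_orth hUaff hPU a (hPU b).1
  have h2 : ⟪b - PU b, PU a - PU b⟫ = 0 := proj_orth hUaff hPU b (hPU a).1
  have e : (⟪PU a - PU b, a - b⟫ : ℝ)
      = -⟪a - PU a, PU b - PU a⟫ - ⟪b - PU b, PU a - PU b⟫ + ⟪PU a - PU b, PU a - PU b⟫ := by
    simp only [inner_sub_left, inner_sub_right]
    linear_combination real_inner_comm a (PU a) + real_inner_comm (PU b) a +
      real_inner_comm (PU a) b + real_inner_comm b (PU b)
  rw [e, h1, h2, real_inner_self_eq_norm_sq]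
  ring

lemma proj_firm {n : ℕ} {U : Set (EuclideanSpace ℝ (Fin n))}
    (hUaff : ∀ x ∈ U, ∀ y ∈ U, ∀ t : ℝ, t • x + (1 - t) • y ∈ U)
    {PU} (hPU : IsProjOn U PU) (a b : EuclideanSpace ℝ (Fin n)) :
    ‖PU a - PU b‖^2 ≤ ‖a - b‖^2 - ‖(PU a - PU b) - (a - b)‖^2 := by
  have h := proj_inner_eq hUaff hPU a b
  have e : ‖(PU a - PU b) - (a - b)‖^2
      = ‖PU a - PU b‖^2 - 2*⟪PU a - PU b, a - b⟫ + ‖a - b‖^2 :=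
    norm_sub_sq_real _ _
  rw [e, ← h]
  ring_nf
  linarith

lemma proj_nonexp {n : ℕ} {U : Set (EuclideanSpace ℝ (Fin n))}
    (hUaff : ∀ x ∈ U, ∀ y ∈ U, ∀ t : ℝ, t • x + (1 - t) • y ∈ U)
    {PU} (hPU : IsProjOn U PU) (a b : EuclideanSpace ℝ (Fin n)) :
    ‖PU a - PU b‖ ≤ ‖a - b‖ := by
  have h := proj_inner_eq hUaff hPU a b
  have h2 := real_inner_le_norm (PU a - PU b) (a - b)
  nlinarith [norm_nonneg (PU a - PU b), norm_nonneg (a - b)]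

set_option maxHeartbeats 1000000 in
/-- If `Fix(T, P_U) ≠ ∅`, the MAP sequence `z^{k+1} = P_U(T(z^k))` converges to a common
fixed point of `T` and `P_U`, from any starting point. -/
theorem map_converges {n : ℕ}
    (T : EuclideanSpace ℝ (Fin n) → EuclideanSpace ℝ (Fin n))
    (hT : FirmlyNonexpansive T)
    (U : Set (EuclideanSpace ℝ (Fin n))) (hUne : U.Nonempty)
    (hUaff : ∀ x ∈ U, ∀ y ∈ U, ∀ t : ℝ, t • x + (1 - t) • y ∈ U)
    (PU : EuclideanSpace ℝ (Fin n) → EuclideanSpace ℝ (Fin n))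
    (hPU : IsProjOn U PU)
    (hfix : ∃ y, T y = y ∧ y ∈ U)
    (z : ℕ → EuclideanSpace ℝ (Fin n))
    (hz : ∀ k, z (k + 1) = PU (T (z k))) :
    ∃ zbar, (T zbar = zbar ∧ zbar ∈ U) ∧
      Filter.Tendsto z Filter.atTop (nhds zbar) := by
  obtain ⟨y, hyT, hyU⟩ := hfix
  -- nonexpansiveness of T
  have Tne : ∀ a b, ‖T a - T b‖ ≤ ‖a - b‖ := by
    intro a b
    have h := hT a b
    nlinarith [norm_nonneg (T a - T b), norm_nonneg (a - b),
      sq_nonneg ‖(T a - T b) - (a - b)‖]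
  -- descent inequality for any common fixed point
  have descent : ∀ w, T w = w → w ∈ U →
      ∀ k, ‖z (k+1) - w‖^2 ≤ ‖z k - w‖^2 - ‖T (z k) - z k‖^2 := by
    intro w hwT hwU k
    have h1 := hT (z k) w
    rw [hwT] at h1
    have e1 : (T (z k) - w) - (z k - w) = T (z k) - z k := by abel
    rw [e1] at h1
    have h2 := proj_firm hUaff hPU (T (z k)) w
    rw [proj_fixed hPU hwU] at h2
    have h3 : ‖PU (T (z k)) - w‖^2 ≤ ‖T (z k) - w‖^2 := by
      nlinarith [sq_nonneg ‖(PU (T (z k)) - w) - (T (z k) - w)‖]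
    rw [hz k]
    linarith
  have anti : ∀ w, T w = w → w ∈ U → Antitone (fun k => ‖z k - w‖) := by
    intro w hwT hwU
    apply antitone_nat_of_succ_le
    intro k
    have h := descent w hwT hwU k
    nlinarith [norm_nonneg (z (k+1) - w), norm_nonneg (z k - w),
      sq_nonneg ‖T (z k) - z k‖]
  -- the squared distances to y converge
  set s : ℕ → ℝ := fun k => ‖z k - y‖^2 with hs
  have santi : Antitone s := by
    intro i j hij
    have := anti y hyT hyU hij
    simp only [hs]
    exact pow_le_pow_left₀ (norm_nonneg _) this 2
  have sbdd : BddBelow (Set.range s) := by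
    refine ⟨0, ?_⟩; rintro _ ⟨k, rfl⟩; exact sq_nonneg _
  have stend := tendsto_atTop_ciInf santi sbdd
  have stend' : Filter.Tendsto (fun k => s (k+1)) Filter.atTop (nhds (⨅ k, s k)) :=
    stend.comp (Filter.tendsto_add_atTop_nat 1)
  have hdiff : Filter.Tendsto (fun k => s k - s (k+1)) Filter.atTop (nhds 0) := by
    simpa using stend.sub stend'
  have hTz : Filter.Tendsto (fun k => ‖T (z k) - z k‖^2) Filter.atTop (nhds 0) := by
    refine squeeze_zero (fun k => sq_nonneg _) (fun k => ?_) hdiff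
    have := descent y hyT hyU k
    simp only [hs]
    linarith
  have hTz' : Filter.Tendsto (fun k => ‖T (z k) - z k‖) Filter.atTop (nhds 0) := by
    have h := (Real.continuous_sqrt.tendsto 0).comp hTz
    simp only [Function.comp_def, Real.sqrt_zero] at h
    convert h using 2 with k
    rw [Real.sqrt_sq (norm_nonneg _)]
  -- bounded orbit, extract a convergent subsequence
  have hball : ∀ k, z k ∈ Metric.closedBall y ‖z 0 - y‖ := by
    intro k
    rw [Metric.mem_closedBall, dist_eq_norm]
    exact anti y hyT hyU (Nat.zero_le k)
  obtain ⟨zbar, -, φ, hφ, hconv⟩ :=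
    tendsto_subseq_of_bounded Metric.isBounded_closedBall hball
  have hconvn : Filter.Tendsto (fun j => ‖z (φ j) - zbar‖) Filter.atTop (nhds 0) := by
    have := tendsto_iff_norm_sub_tendsto_zero.mp hconv
    simpa [Function.comp_def] using this
  -- T zbar = zbar
  have h1 : Filter.Tendsto (fun j => T (z (φ j))) Filter.atTop (nhds zbar) := by
    have ha : Filter.Tendsto (fun j => T (z (φ j)) - z (φ j)) Filter.atTop (nhds 0) := by
      rw [tendsto_zero_iff_norm_tendsto_zero]
      exact hTz'.comp hφ.tendsto_atTop
    have := ha.add hconv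
    simpa using this
  have h2 : Filter.Tendsto (fun j => T (z (φ j))) Filter.atTop (nhds (T zbar)) := by
    rw [tendsto_iff_norm_sub_tendsto_zero]
    refine squeeze_zero (fun j => norm_nonneg _) (fun j => Tne _ _) hconvn
  have hTzbar : T zbar = zbar := tendsto_nhds_unique h2 h1
  -- zbar ∈ U
  have hzU : ∀ k, z (k+1) ∈ U := fun k => by rw [hz k]; exact (hPU _).1
  have hPUzbar : PU zbar = zbar := by
    have hb : ∀ᶠ j in Filter.atTop, ‖PU zbar - zbar‖ ≤ 2 * ‖z (φ j) - zbar‖ := by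
      rw [Filter.eventually_atTop]
      refine ⟨1, fun j hj => ?_⟩
      have hφj : 1 ≤ φ j := le_trans hj (hφ.le_apply)
      obtain ⟨m, hm⟩ := Nat.exists_eq_add_of_le hφj
      have hmem : z (φ j) ∈ U := by rw [hm, add_comm]; exact hzU m
      have hfixj : PU (z (φ j)) = z (φ j) := proj_fixed hPU hmem
      have step : ‖PU zbar - PU (z (φ j))‖ ≤ ‖zbar - z (φ j)‖ := proj_nonexp hUaff hPU _ _
      calc ‖PU zbar - zbar‖
          ≤ ‖PU zbar - PU (z (φ j))‖ + ‖PU (z (φ j)) - zbar‖ :=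
            norm_sub_le_norm_sub_add_norm_sub _ _ _
        _ = ‖PU zbar - PU (z (φ j))‖ + ‖z (φ j) - zbar‖ := by rw [hfixj]
        _ ≤ ‖zbar - z (φ j)‖ + ‖z (φ j) - zbar‖ := add_le_add_left step _
        _ = 2 * ‖z (φ j) - zbar‖ := by rw [norm_sub_rev]; ring
    have hlim : Filter.Tendsto (fun j => 2 * ‖z (φ j) - zbar‖) Filter.atTop (nhds 0) := by
      simpa using hconvn.const_mul 2
    have := ge_of_tendsto hlim hb
    have h0 : ‖PU zbar - zbar‖ = 0 := le_antisymm (by linarith) (norm_nonneg _)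
    exact sub_eq_zero.mp (norm_eq_zero.mp h0)
  have hzbarU : zbar ∈ U := hPUzbar ▸ (hPU zbar).1
  -- convergence of the whole sequence
  refine ⟨zbar, ⟨hTzbar, hzbarU⟩, ?_⟩
  have antiz : Antitone (fun k => ‖z k - zbar‖) := anti zbar hTzbar hzbarU
  have hbdd : BddBelow (Set.range fun k => ‖z k - zbar‖) := by
    refine ⟨0, ?_⟩; rintro _ ⟨k, rfl⟩; exact norm_nonneg _
  have hL := tendsto_atTop_ciInf antiz hbdd
  have hLsub : Filter.Tendsto (fun j => ‖z (φ j) - zbar‖) Filter.atTop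
      (nhds (⨅ k, ‖z k - zbar‖)) := hL.comp hφ.tendsto_atTop
  have hinf0 : (⨅ k, ‖z k - zbar‖) = 0 := tendsto_nhds_unique hLsub hconvn
  rw [hinf0] at hL
  rw [tendsto_iff_norm_sub_tendsto_zero]
  exact hL
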